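/- In the expansion of the (d-1)-dimensional volume of projected faces, the vector V = (det(u_1, u_{d+1},...,u_n, e_{a_1},...,e_{a_{d-1}}))_{a ∈ O_{d-1}} satisfies (M_{d-1})^T V = β V, where (M_{d-1})_{b,a} = (-1)^{Σa_i + Σb_i}(∧^{n-d+1} M_σ^T)_{b*,a*} and u_1, u_{d+1},...,u_n are eigenvectors of M_σ for eigenvalues β, ζ_{d+1},...,ζ_n with β·ζ_{d+1}···ζ_n = β (i.e., ∏ζ_i = 1). -/

import Mathlib

open Matrix

/-- The determinant `V_A = det(u_1, u_{d+1}, ..., u_n, e_{a_1}, ..., e_{a_{d-1}})`,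
with columns arranged via a fixed bijection `e`. -/
def wedgeDet (n d : ℕ) (u1 : Fin n → ℂ) (us : Fin (n - d) → Fin n → ℂ)
    (e : (Option (Fin (n - d)) ⊕ Fin (d - 1)) ≃ Fin n)
    (A : {s : Finset (Fin n) // s.card = d - 1}) : ℂ :=
  Matrix.det (Matrix.of fun i j =>
    Sum.elim (fun o => Option.elim o (u1 i) (fun k => us k i))
      (fun jm => if i = (A.1.orderIsoOfFin A.2 jm : Fin n) then (1 : ℂ) else 0)
      (e.symm j))

/-- The matrix `M_{d-1}` of the geometric dual map:
`(M_{d-1})_{B,A} = (-1)^{ΣA + ΣB} (∧^{n-d+1} Mᵀ)_{B*,A*}`, where the starred minor is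
the determinant of the submatrix of `Mᵀ` with rows in `Bᶜ` and columns in `Aᶜ`. -/
def dualMatrix (n d : ℕ) (M : Matrix (Fin n) (Fin n) ℂ)
    (B A : {s : Finset (Fin n) // s.card = d - 1}) : ℂ :=
  if h : A.1ᶜ.card = n - d + 1 ∧ B.1ᶜ.card = n - d + 1 then
    (-1 : ℂ) ^ (∑ i ∈ A.1, (i : ℕ) + ∑ i ∈ B.1, (i : ℕ)) *
      (M.transpose.submatrix
        (fun i : Fin (n - d + 1) => (B.1ᶜ.orderIsoOfFin h.2 i : Fin n))
        (fun j : Fin (n - d + 1) => (A.1ᶜ.orderIsoOfFin h.1 j : Fin n))).det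
  else 0

open Finset Equiv

namespace Stmt13Aux

variable {n d : ℕ}

abbrev Idx (n d : ℕ) := Option (Fin (n - d)) ⊕ Fin (d - 1)

abbrev Sub (n d : ℕ) := {s : Finset (Fin n) // s.card = d - 1}

lemma compl_card (hd : 1 ≤ d) (hdn : d ≤ n) (A : Sub n d) : (A.1ᶜ).card = n - d + 1 := by
  rw [Finset.card_compl, A.2, Fintype.card_fin]; omega

/-- sorted enumeration of the complement -/
def csort (hd : 1 ≤ d) (hdn : d ≤ n) (A : Sub n d) : Fin (n - d + 1) → Fin n :=
  A.1ᶜ.orderEmbOfFin (compl_card hd hdn A)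

/-- sorted enumeration of the set -/
def asort (A : Sub n d) : Fin (d - 1) → Fin n := A.1.orderEmbOfFin A.2

lemma csort_mem (hd : 1 ≤ d) (hdn : d ≤ n) (A : Sub n d) (i) : csort hd hdn A i ∈ A.1ᶜ :=
  Finset.orderEmbOfFin_mem _ _ _

lemma asort_mem (A : Sub n d) (j) : asort A j ∈ A.1 := Finset.orderEmbOfFin_mem _ _ _

lemma csort_injective (hd : 1 ≤ d) (hdn : d ≤ n) (A : Sub n d) :
    Function.Injective (csort hd hdn A) :=
  (A.1ᶜ.orderEmbOfFin (compl_card hd hdn A)).injective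

lemma asort_injective (A : Sub n d) : Function.Injective (asort A) :=
  (A.1.orderEmbOfFin A.2).injective

def thetaFun (hd : 1 ≤ d) (hdn : d ≤ n) (A : Sub n d) : Idx n d → Fin n :=
  Sum.elim (fun o => csort hd hdn A ((finSuccEquiv (n - d)).symm o)) (fun j => asort A j)

lemma thetaFun_bijective (hd : 1 ≤ d) (hdn : d ≤ n) (A : Sub n d) :
    Function.Bijective (thetaFun hd hdn A) := by
  rw [Fintype.bijective_iff_injective_and_card]
  constructor
  · rintro (o | j) (o' | j') h
    · simp only [thetaFun, Sum.elim_inl] at h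
      have := csort_injective hd hdn A h
      simpa using (finSuccEquiv (n - d)).symm.injective this
    · exact absurd ((Finset.mem_compl.1 (csort_mem hd hdn A _)))
        (by simp only [thetaFun, Sum.elim_inl, Sum.elim_inr] at h; rw [h]; simpa using asort_mem A j')
    · exact absurd ((Finset.mem_compl.1 (csort_mem hd hdn A _)))
        (by simp only [thetaFun, Sum.elim_inl, Sum.elim_inr] at h; rw [← h]; simpa using asort_mem A j)
    · simp only [thetaFun, Sum.elim_inr] at h
      simpa using asort_injective A h
  · simp only [Fintype.card_sum, Fintype.card_option, Fintype.card_fin]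
    omega

noncomputable def theta (hd : 1 ≤ d) (hdn : d ≤ n) (A : Sub n d) : Idx n d ≃ Fin n :=
  Equiv.ofBijective _ (thetaFun_bijective hd hdn A)

@[simp] lemma theta_inl (hd : 1 ≤ d) (hdn : d ≤ n) (A : Sub n d) (o) :
    theta hd hdn A (Sum.inl o) = csort hd hdn A ((finSuccEquiv (n - d)).symm o) := rfl

@[simp] lemma theta_inr (hd : 1 ≤ d) (hdn : d ≤ n) (A : Sub n d) (j) :
    theta hd hdn A (Sum.inr j) = asort A j := rfl


variable (e : (Option (Fin (n - d)) ⊕ Fin (d - 1)) ≃ Fin n)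

/-- the permutation whose sign is the Laplace sign -/
noncomputable def tau (hd : 1 ≤ d) (hdn : d ≤ n) (A : Sub n d) : Equiv.Perm (Idx n d) :=
  (theta hd hdn A).trans e.symm

noncomputable def eps (hd : 1 ≤ d) (hdn : d ≤ n) (A : Sub n d) : ℂ :=
  ((Equiv.Perm.sign (tau e hd hdn A) : ℤ) : ℂ)

lemma eps_mul_self (hd : 1 ≤ d) (hdn : d ≤ n) (A : Sub n d) :
    eps e hd hdn A * eps e hd hdn A = 1 := by
  unfold eps
  rcases Int.units_eq_one_or (Equiv.Perm.sign (tau e hd hdn A)) with h | h <;> rw [h] <;> norm_num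

/-- C2: extracting the unit columns from the determinant -/
lemma det_unit_cols (hd : 1 ≤ d) (hdn : d ≤ n)
    (v : Option (Fin (n - d)) → Fin n → ℂ) (A : Sub n d) :
    Matrix.det (Matrix.of fun i j =>
      Sum.elim (fun o => v o i)
        (fun jm => if i = (A.1.orderIsoOfFin A.2 jm : Fin n) then (1 : ℂ) else 0)
        (e.symm j))
    = eps e hd hdn A * Matrix.det (Matrix.of fun (i o : Fin (n - d + 1)) =>
        v ((finSuccEquiv (n - d)) o) (csort hd hdn A i)) := by
  set K := Matrix.of fun i j =>
      Sum.elim (fun o => v o i)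
        (fun jm => if i = (A.1.orderIsoOfFin A.2 jm : Fin n) then (1 : ℂ) else 0)
        (e.symm j) with hK
  set X : Matrix (Option (Fin (n - d))) (Option (Fin (n - d))) ℂ :=
    Matrix.of fun o' o => v o (csort hd hdn A ((finSuccEquiv (n - d)).symm o')) with hX
  set Y : Matrix (Fin (d - 1)) (Option (Fin (n - d))) ℂ :=
    Matrix.of fun j' o => v o (asort A j') with hY
  have h1 : K.submatrix (theta hd hdn A) e = Matrix.fromBlocks X 0 Y 1 := by
    ext x y
    rcases x with o' | j' <;> rcases y with o | jm
    · simp [hK, hX]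
    · simp only [Matrix.submatrix_apply, hK, Matrix.of_apply, Equiv.symm_apply_apply,
        Sum.elim_inr, theta_inl, Matrix.fromBlocks_apply₁₂, Matrix.zero_apply]
      rw [if_neg]
      intro h
      have h1 := Finset.mem_compl.1 (csort_mem hd hdn A ((finSuccEquiv (n - d)).symm o'))
      rw [h] at h1
      exact h1 (asort_mem A jm)
    · simp [hK, hY]
    · simp only [Matrix.submatrix_apply, hK, Matrix.of_apply, Equiv.symm_apply_apply,
        Sum.elim_inr, theta_inr, Matrix.fromBlocks_apply₂₂, Matrix.one_apply]
      by_cases h : j' = jm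
      · subst h; simp [asort]
      · rw [if_neg h, if_neg]
        intro hc
        exact h (asort_injective A hc)
  have h2 : (K.submatrix (theta hd hdn A) e).det
      = (Equiv.Perm.sign (tau e hd hdn A) : ℤ) * K.det := by
    have : K.submatrix (theta hd hdn A) e
        = (K.submatrix e e).submatrix (tau e hd hdn A) id := by
      ext x y
      simp [tau, Matrix.submatrix_apply]
    rw [this, Matrix.det_permute, Matrix.det_submatrix_equiv_self]
  have h3 : (K.submatrix (theta hd hdn A) e).det = X.det := by
    rw [h1, Matrix.det_fromBlocks_zero₁₂, Matrix.det_one, mul_one]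
  have h4 : X.det = Matrix.det (Matrix.of fun (i o : Fin (n - d + 1)) =>
        v ((finSuccEquiv (n - d)) o) (csort hd hdn A i)) := by
    rw [← Matrix.det_submatrix_equiv_self (finSuccEquiv (n - d)) X]
    congr 1
    ext i o
    simp [hX]
  have h6 : eps e hd hdn A * K.det = (Matrix.of fun (i o : Fin (n - d + 1)) =>
      v ((finSuccEquiv (n - d)) o) (csort hd hdn A i)).det := by
    simp only [eps]
    rw [h2.symm.trans h3, h4]
  calc K.det = eps e hd hdn A * (eps e hd hdn A * K.det) := by
        rw [← mul_assoc, eps_mul_self, one_mul]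
    _ = _ := by rw [h6]

lemma orderEmbOfFin_congr {s t : Finset (Fin n)} {k : ℕ} (hst : s = t)
    (h : s.card = k) (h' : t.card = k) (i : Fin k) :
    s.orderEmbOfFin h i = t.orderEmbOfFin h' i := by subst hst; rfl

lemma image_orderEmbOfFin (s : Finset (Fin n)) {k : ℕ} (h : s.card = k) :
    Finset.image (s.orderEmbOfFin h) Finset.univ = s := by
  ext x
  simp only [Finset.mem_image, Finset.mem_univ, true_and]
  constructor
  · rintro ⟨i, rfl⟩; exact Finset.orderEmbOfFin_mem s h i
  · intro hx
    refine ⟨(s.orderIsoOfFin h).symm ⟨x, hx⟩, ?_⟩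
    rw [← Finset.coe_orderIsoOfFin_apply, OrderIso.apply_symm_apply]

/-- the complement of the image of an injective tuple, as a `Sub n d` -/
noncomputable def fSet (hd : 1 ≤ d) (hdn : d ≤ n) (f : Fin (n - d + 1) → Fin n)
    (hf : Function.Injective f) : Sub n d :=
  ⟨(Finset.image f Finset.univ)ᶜ, by
    rw [Finset.card_compl, Finset.card_image_of_injective _ hf, Finset.card_univ,
      Fintype.card_fin, Fintype.card_fin]
    omega⟩

lemma mem_fSet_compl (hd : 1 ≤ d) (hdn : d ≤ n) (f : Fin (n - d + 1) → Fin n)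
    (hf : Function.Injective f) (k : Fin (n - d + 1)) : f k ∈ (fSet hd hdn f hf).1ᶜ := by
  simp only [fSet, compl_compl]
  exact Finset.mem_image_of_mem f (Finset.mem_univ k)

noncomputable def fPerm (hd : 1 ≤ d) (hdn : d ≤ n) (f : Fin (n - d + 1) → Fin n)
    (hf : Function.Injective f) : Equiv.Perm (Fin (n - d + 1)) :=
  (Equiv.ofBijective (fun k => (⟨f k, mem_fSet_compl hd hdn f hf k⟩ :
      ((fSet hd hdn f hf).1ᶜ : Finset (Fin n)))) (by
    rw [Fintype.bijective_iff_injective_and_card]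
    constructor
    · intro a b hab
      exact hf (congrArg Subtype.val hab)
    · rw [Fintype.card_coe, compl_card hd hdn, Fintype.card_fin])).trans
    ((fSet hd hdn f hf).1ᶜ.orderIsoOfFin (compl_card hd hdn _)).toEquiv.symm

lemma orderEmb_orderIso_symm (s : Finset (Fin n)) {k : ℕ} (h : s.card = k) (x : ↥s) :
    s.orderEmbOfFin h ((s.orderIsoOfFin h).toEquiv.symm x) = ↑x := by
  rw [← Finset.coe_orderIsoOfFin_apply]
  exact congrArg Subtype.val ((s.orderIsoOfFin h).toEquiv.apply_symm_apply x)

lemma csort_fPerm (hd : 1 ≤ d) (hdn : d ≤ n) (f : Fin (n - d + 1) → Fin n)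
    (hf : Function.Injective f) (k : Fin (n - d + 1)) :
    csort hd hdn (fSet hd hdn f hf) (fPerm hd hdn f hf k) = f k := by
  unfold csort fPerm
  simp only [Equiv.trans_apply, Equiv.ofBijective_apply]
  exact orderEmb_orderIso_symm _ _ _

lemma cauchy_binet (hd : 1 ≤ d) (hdn : d ≤ n)
    (P : Matrix (Fin (n - d + 1)) (Fin n) ℂ) (U : Matrix (Fin n) (Fin (n - d + 1)) ℂ) :
    (P * U).det
      = ∑ B : Sub n d,
          (P.submatrix id (csort hd hdn B)).det * (U.submatrix (csort hd hdn B) id).det := by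
  classical
  have expand : (P * U).det
      = ∑ f : Fin (n - d + 1) → Fin n, (∏ j, U (f j) j) * (P.submatrix id f).det := by
    rw [← Matrix.det_transpose]
    have hrows : (P * U)ᵀ = fun j => ∑ k : Fin n, U k j • (fun i => P i k) := by
      ext j i
      simp [Matrix.mul_apply, Matrix.transpose_apply, Finset.sum_apply, mul_comm]
    calc ((P * U)ᵀ).det
        = Matrix.detRowAlternating (fun j => ∑ k : Fin n, U k j • (fun i => P i k)) := by
          rw [← hrows]; rfl
      _ = ∑ r : Fin (n - d + 1) → Fin n,
            Matrix.detRowAlternating (fun j => U (r j) j • (fun i => P i (r j))) :=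
          (Matrix.detRowAlternating (R := ℂ) (n := Fin (n - d + 1))).toMultilinearMap.map_sum
            (g := fun j k => U k j • (fun i => P i k))
      _ = ∑ r : Fin (n - d + 1) → Fin n,
            (∏ j, U (r j) j) • Matrix.detRowAlternating (fun j i => P i (r j)) := by
          refine Finset.sum_congr rfl fun r _ => ?_
          exact (Matrix.detRowAlternating (R := ℂ)
            (n := Fin (n - d + 1))).toMultilinearMap.map_smul_univ _ _
      _ = ∑ r : Fin (n - d + 1) → Fin n, (∏ j, U (r j) j) * (P.submatrix id r).det := by
          refine Finset.sum_congr rfl fun r _ => ?_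
          rw [smul_eq_mul]
          congr 1
          rw [← Matrix.det_transpose (P.submatrix id r)]
          rfl
  rw [expand, ← Finset.sum_filter_add_sum_filter_not Finset.univ
    (fun f : Fin (n - d + 1) → Fin n => Function.Injective f)]
  have hzero : ∑ f ∈ Finset.univ.filter
      (fun f : Fin (n - d + 1) → Fin n => ¬ Function.Injective f),
      (∏ j, U (f j) j) * (P.submatrix id f).det = 0 := by
    apply Finset.sum_eq_zero
    intro f hf
    rw [Finset.mem_filter] at hf
    obtain ⟨i, j, hij, hne⟩ := Function.not_injective_iff.1 hf.2
    have hD : (P.submatrix id f).det = 0 := by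
      rw [← Matrix.det_transpose]
      apply Matrix.det_zero_of_row_eq hne
      ext k
      simp [Matrix.transpose_apply, Matrix.submatrix_apply, hij]
    rw [hD, mul_zero]
  rw [hzero, add_zero]
  have hmain : ∑ f ∈ Finset.univ.filter
      (fun f : Fin (n - d + 1) → Fin n => Function.Injective f),
      (∏ j, U (f j) j) * (P.submatrix id f).det
      = ∑ x ∈ (Finset.univ : Finset (Sub n d × Equiv.Perm (Fin (n - d + 1)))),
          (((Equiv.Perm.sign x.2 : ℤ) : ℂ) * ∏ j, U (csort hd hdn x.1 (x.2 j)) j)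
            * (P.submatrix id (csort hd hdn x.1)).det := by
    refine Finset.sum_bij'
      (i := fun f hf => (fSet hd hdn f (Finset.mem_filter.1 hf).2,
        fPerm hd hdn f (Finset.mem_filter.1 hf).2))
      (j := fun x _ => csort hd hdn x.1 ∘ x.2)
      (fun f hf => Finset.mem_univ _)
      (fun x hx => by
        rw [Finset.mem_filter]
        exact ⟨Finset.mem_univ _, (csort_injective hd hdn x.1).comp x.2.injective⟩)
      ?_ ?_ ?_
    · intro f hf
      funext k
      exact csort_fPerm hd hdn f (Finset.mem_filter.1 hf).2 k
    · rintro ⟨B, pi⟩ hx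
      have hinj : Function.Injective (csort hd hdn B ∘ pi) :=
        (csort_injective hd hdn B).comp pi.injective
      have hset : Finset.image (csort hd hdn B ∘ pi) Finset.univ = B.1ᶜ := by
        rw [← Finset.image_image, Finset.image_univ_equiv]
        exact image_orderEmbOfFin _ _
      have hS : fSet hd hdn (csort hd hdn B ∘ pi) hinj = B := by
        apply Subtype.ext
        show (Finset.image (csort hd hdn B ∘ pi) Finset.univ)ᶜ = B.1
        rw [hset, compl_compl]
      have hS0B : (fSet hd hdn (csort hd hdn B ∘ pi) hinj).1ᶜ = B.1ᶜ := by rw [hS]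
      refine Prod.ext hS ?_
      show fPerm hd hdn (csort hd hdn B ∘ pi) hinj = pi
      apply Equiv.ext
      intro k
      simp only [fPerm, Equiv.trans_apply, Equiv.ofBijective_apply]
      rw [Equiv.symm_apply_eq]
      apply Subtype.ext
      show (csort hd hdn B ∘ pi) k
        = ((fSet hd hdn (csort hd hdn B ∘ pi) hinj).1ᶜ.orderEmbOfFin
            (compl_card hd hdn _) (pi k) : Fin n)
      exact orderEmbOfFin_congr hS0B.symm (compl_card hd hdn B) (compl_card hd hdn _) (pi k)
    · intro f hf
      have hfi := (Finset.mem_filter.1 hf).2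
      have h1 : ∀ j, f j = csort hd hdn (fSet hd hdn f hfi)
          (fPerm hd hdn f hfi j) := fun j => (csort_fPerm hd hdn f hfi j).symm
      have h2 : P.submatrix id f
          = (P.submatrix id (csort hd hdn (fSet hd hdn f hfi))).submatrix id
              (fPerm hd hdn f hfi) := by
        ext a b
        simp only [Matrix.submatrix_apply, id_eq]
        rw [h1 b]
      have h3 : (∏ j, U (f j) j)
          = ∏ j, U (csort hd hdn (fSet hd hdn f hfi) (fPerm hd hdn f hfi j)) j :=
        Finset.prod_congr rfl fun j _ => by rw [h1 j]
      rw [h2, Matrix.det_permute', h3]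
      push_cast
      ring
  rw [hmain, Fintype.sum_prod_type]
  refine Finset.sum_congr rfl fun B _ => ?_
  show ∑ y : Equiv.Perm (Fin (n - d + 1)),
      (((Equiv.Perm.sign y : ℤ) : ℂ) * ∏ j, U (csort hd hdn B (y j)) j)
        * (P.submatrix id (csort hd hdn B)).det = _
  rw [← Finset.sum_mul, mul_comm]
  congr 1
  rw [Matrix.det_apply']
  refine Finset.sum_congr rfl fun pi _ => rfl

section Sign

lemma theta_adjacent_swap (hd : 1 ≤ d) (hdn : d ≤ n) (A : Sub n d) (a b : Fin n)
    (ha : a ∈ A.1) (hb : b ∉ A.1) (hab : (a : ℕ) + 1 = (b : ℕ)) (A' : Sub n d)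
    (hA' : A'.1 = insert b (A.1.erase a)) :
    ∀ x, theta hd hdn A' x = Equiv.swap a b (theta hd hdn A x) := by
  have hane : a ≠ b := by intro h; rw [h] at hab; omega
  have hswap_mem : ∀ x : Fin n, x ∈ A.1 → Equiv.swap a b x ∈ A'.1 := by
    intro x hx
    rcases eq_or_ne x a with rfl | hxa
    · rw [Equiv.swap_apply_left, hA']
      exact Finset.mem_insert_self _ _
    · have hxb : x ≠ b := fun h => hb (h ▸ hx)
      rw [Equiv.swap_apply_of_ne_of_ne hxa hxb, hA']
      exact Finset.mem_insert_of_mem (Finset.mem_erase.2 ⟨hxa, hx⟩)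
  have hswap_memc : ∀ x : Fin n, x ∈ A.1ᶜ → Equiv.swap a b x ∈ A'.1ᶜ := by
    intro x hx
    rw [Finset.mem_compl] at hx
    have hxa : x ≠ a := fun h => hx (h ▸ ha)
    rcases eq_or_ne x b with rfl | hxb
    · rw [Equiv.swap_apply_right, Finset.mem_compl, hA']
      intro hmem
      rcases Finset.mem_insert.1 hmem with h | h
      · exact hane h
      · exact (Finset.mem_erase.1 h).1 rfl
    · rw [Equiv.swap_apply_of_ne_of_ne hxa hxb, Finset.mem_compl, hA']
      intro hmem
      rcases Finset.mem_insert.1 hmem with h | h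
      · exact hxb h
      · exact hx (Finset.mem_of_mem_erase h)
  have hmono : ∀ x y : Fin n, x ∈ A.1 → y ∈ A.1 → x < y →
      Equiv.swap a b x < Equiv.swap a b y := by
    intro x y hx hy hxy
    have hxb : x ≠ b := fun h => hb (h ▸ hx)
    have hyb : y ≠ b := fun h => hb (h ▸ hy)
    have h1 : (x : ℕ) < (y : ℕ) := hxy
    have hxbv : (x : ℕ) ≠ (b : ℕ) := fun h => hxb (Fin.val_injective h)
    have hybv : (y : ℕ) ≠ (b : ℕ) := fun h => hyb (Fin.val_injective h)
    by_cases hxa : x = a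
    · have hxav : (x : ℕ) = (a : ℕ) := by rw [hxa]
      have hya : y ≠ a := by intro h; rw [h] at hxy; exact absurd (hxa ▸ hxy) (lt_irrefl _)
      rw [hxa, Equiv.swap_apply_left, Equiv.swap_apply_of_ne_of_ne hya hyb]
      exact Fin.lt_def.2 (by omega)
    · by_cases hya : y = a
      · have hyav : (y : ℕ) = (a : ℕ) := by rw [hya]
        rw [hya, Equiv.swap_apply_left, Equiv.swap_apply_of_ne_of_ne hxa hxb]
        exact Fin.lt_def.2 (by omega)
      · rw [Equiv.swap_apply_of_ne_of_ne hxa hxb, Equiv.swap_apply_of_ne_of_ne hya hyb]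
        exact hxy
  have hmonoc : ∀ x y : Fin n, x ∈ A.1ᶜ → y ∈ A.1ᶜ → x < y →
      Equiv.swap a b x < Equiv.swap a b y := by
    intro x y hx hy hxy
    rw [Finset.mem_compl] at hx hy
    have hxa : x ≠ a := fun h => hx (h ▸ ha)
    have hya : y ≠ a := fun h => hy (h ▸ ha)
    have h1 : (x : ℕ) < (y : ℕ) := hxy
    have hxav : (x : ℕ) ≠ (a : ℕ) := fun h => hxa (Fin.val_injective h)
    have hyav : (y : ℕ) ≠ (a : ℕ) := fun h => hya (Fin.val_injective h)
    by_cases hxb : x = b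
    · have hxbv : (x : ℕ) = (b : ℕ) := by rw [hxb]
      have hyb : y ≠ b := by intro h; rw [h] at hxy; exact absurd (hxb ▸ hxy) (lt_irrefl _)
      rw [hxb, Equiv.swap_apply_right, Equiv.swap_apply_of_ne_of_ne hya hyb]
      exact Fin.lt_def.2 (by omega)
    · by_cases hyb : y = b
      · have hybv : (y : ℕ) = (b : ℕ) := by rw [hyb]
        rw [hyb, Equiv.swap_apply_right, Equiv.swap_apply_of_ne_of_ne hxa hxb]
        exact Fin.lt_def.2 (by omega)
      · rw [Equiv.swap_apply_of_ne_of_ne hxa hxb, Equiv.swap_apply_of_ne_of_ne hya hyb]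
        exact hxy
  have claim1 : (fun j => Equiv.swap a b (asort A j)) = A'.1.orderEmbOfFin A'.2 :=
    Finset.orderEmbOfFin_unique A'.2 (fun j => hswap_mem _ (asort_mem A j))
      (fun j j' hjj => hmono _ _ (asort_mem A j) (asort_mem A j')
        ((A.1.orderEmbOfFin A.2).strictMono hjj))
  have claim2 : (fun i => Equiv.swap a b (csort hd hdn A i))
      = A'.1ᶜ.orderEmbOfFin (compl_card hd hdn A') :=
    Finset.orderEmbOfFin_unique _ (fun i => hswap_memc _ (csort_mem hd hdn A i))
      (fun i i' hii => hmonoc _ _ (csort_mem hd hdn A i) (csort_mem hd hdn A i')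
        ((A.1ᶜ.orderEmbOfFin (compl_card hd hdn A)).strictMono hii))
  rintro (o | j)
  · exact (congrFun claim2 _).symm
  · exact (congrFun claim1 _).symm

lemma sum_val_lt (hn : 1 ≤ n) (s : Finset (Fin n)) : ∑ x ∈ s, (x : ℕ) < n * n := by
  have h1 : ∑ x ∈ s, (x : ℕ) ≤ s.card • (n - 1) :=
    Finset.sum_le_card_nsmul s _ _ (fun x _ => by omega)
  rw [smul_eq_mul] at h1
  have h2 : s.card ≤ n := by
    have := Finset.card_le_univ s
    simpa [Finset.card_univ] using this
  have h3 : s.card * (n - 1) ≤ n * (n - 1) := Nat.mul_le_mul_right _ h2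
  have h4 : n * (n - 1) + n = n * n := by
    obtain ⟨m, rfl⟩ : ∃ m, n = m + 1 := ⟨n - 1, by omega⟩
    simp only [Nat.succ_sub_one]
    ring
  omega

def sucClosed (s : Finset (Fin n)) : Prop :=
  ∀ a : Fin n, a ∈ s → ∀ (h : (a : ℕ) + 1 < n), (⟨(a : ℕ) + 1, h⟩ : Fin n) ∈ s

lemma sucClosed_up {s : Finset (Fin n)} (hs : sucClosed s) {x : Fin n} (hx : x ∈ s) :
    ∀ t (ht : t < n), (x : ℕ) ≤ t → (⟨t, ht⟩ : Fin n) ∈ s := by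
  intro t
  induction t with
  | zero =>
    intro ht h0
    have hx0 : x = ⟨0, ht⟩ := by apply Fin.ext; show (x : ℕ) = 0; omega
    rw [← hx0]; exact hx
  | succ t iht =>
    intro ht hxt
    rcases Nat.lt_or_ge (x : ℕ) (t + 1) with h | h
    · have h1 : (⟨t, by omega⟩ : Fin n) ∈ s := iht (by omega) (by omega)
      exact hs _ h1 ht
    · have hx0 : x = ⟨t + 1, ht⟩ := by apply Fin.ext; show (x : ℕ) = t + 1; omega
      rw [← hx0]; exact hx

lemma sucClosed_eq {s t : Finset (Fin n)} (hs : sucClosed s) (ht : sucClosed t)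
    (hcard : s.card = t.card) : s = t := by
  rcases s.eq_empty_or_nonempty with rfl | hsne
  · symm
    rw [← Finset.card_eq_zero, ← hcard]
    simp
  rcases t.eq_empty_or_nonempty with rfl | htne
  · rw [← Finset.card_eq_zero, hcard]
    simp
  rcases le_total (s.min' hsne) (t.min' htne) with h | h
  · have hsub : t ⊆ s := by
      intro x hx
      have h1 : (s.min' hsne : ℕ) ≤ (x : ℕ) := le_trans h (t.min'_le x hx)
      have h2 := sucClosed_up hs (s.min'_mem hsne) (x : ℕ) x.2 h1
      simpa using h2
    exact (Finset.eq_of_subset_of_card_le hsub (le_of_eq hcard)).symm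
  · have hsub : s ⊆ t := by
      intro x hx
      have h1 : (t.min' htne : ℕ) ≤ (x : ℕ) := le_trans h (s.min'_le x hx)
      have h2 := sucClosed_up ht (t.min'_mem htne) (x : ℕ) x.2 h1
      simpa using h2
    exact Finset.eq_of_subset_of_card_le hsub (le_of_eq hcard.symm)

lemma exists_swap_or_closed (s : Finset (Fin n)) :
    sucClosed s ∨ ∃ a b : Fin n, a ∈ s ∧ b ∉ s ∧ (a : ℕ) + 1 = (b : ℕ) := by
  by_cases h : sucClosed s
  · exact Or.inl h
  · right
    unfold sucClosed at h
    push_neg at h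
    obtain ⟨a, ha, hlt, hmem⟩ := h
    exact ⟨a, ⟨(a : ℕ) + 1, hlt⟩, ha, hmem, rfl⟩

lemma swap_set_card (A : Sub n d) {a b : Fin n} (ha : a ∈ A.1) (hb : b ∉ A.1) :
    (insert b (A.1.erase a)).card = d - 1 := by
  have hpos : 0 < d - 1 := A.2 ▸ Finset.card_pos.2 ⟨a, ha⟩
  rw [Finset.card_insert_of_notMem (fun hmem => hb (Finset.mem_of_mem_erase hmem)),
    Finset.card_erase_of_mem ha, A.2]
  omega

lemma swap_set_sum (A : Sub n d) {a b : Fin n} (ha : a ∈ A.1) (hb : b ∉ A.1) :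
    ∑ x ∈ insert b (A.1.erase a), (x : ℕ) = (∑ x ∈ A.1, (x : ℕ)) + (b : ℕ) - (a : ℕ) := by
  rw [Finset.sum_insert (fun hmem => hb (Finset.mem_of_mem_erase hmem))]
  have h2 : (a : ℕ) + ∑ x ∈ A.1.erase a, (x : ℕ) = ∑ x ∈ A.1, (x : ℕ) :=
    Finset.add_sum_erase A.1 (fun x : Fin n => (x : ℕ)) ha
  omega

lemma sign_theta_ratio (hd : 1 ≤ d) (hdn : d ≤ n) :
    ∀ (k : ℕ) (A B : Sub n d),
      (n * n - ∑ x ∈ A.1, (x : ℕ)) + (n * n - ∑ x ∈ B.1, (x : ℕ)) ≤ k →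
      Equiv.Perm.sign ((theta hd hdn A).trans (theta hd hdn B).symm)
        = (-1 : ℤˣ) ^ ((∑ x ∈ A.1, (x : ℕ)) + ∑ x ∈ B.1, (x : ℕ)) := by
  have hn : 1 ≤ n := le_trans hd hdn
  intro k
  induction k with
  | zero =>
    intro A B hk
    exfalso
    have h1 := sum_val_lt hn A.1
    have h2 := sum_val_lt hn B.1
    omega
  | succ k ih =>
    intro A B hk
    rcases exists_swap_or_closed A.1 with hA | ⟨a, b, ha, hb, hab⟩
    · rcases exists_swap_or_closed B.1 with hB | ⟨a, b, ha, hb, hab⟩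
      · have hAB : A = B := Subtype.ext (sucClosed_eq hA hB (by rw [A.2, B.2]))
        subst hAB
        rw [Equiv.self_trans_symm]
        rw [show Equiv.Perm.sign (Equiv.refl (Idx n d)) = 1 from Equiv.Perm.sign_refl]
        exact ((pow_add _ _ _).trans (Int.units_mul_self _)).symm
      · -- swap in B
        have hane : a ≠ b := by intro h; rw [h] at hab; omega
        have hcard' := swap_set_card B ha hb
        set B' : Sub n d := ⟨insert b (B.1.erase a), hcard'⟩ with hB'def
        have hθ := theta_adjacent_swap hd hdn B a b ha hb hab B' rfl
        have hBtrans : theta hd hdn B' = (theta hd hdn B).trans (Equiv.swap a b) :=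
          Equiv.ext hθ
        have hγ : (theta hd hdn A).trans (theta hd hdn B').symm
            = ((theta hd hdn A).trans (theta hd hdn B).symm).trans
              (((theta hd hdn B).symm).permCongr (Equiv.swap a b)) := by
          ext x
          simp [hBtrans, Equiv.permCongr_apply]
        have hsum : ∑ x ∈ B'.1, (x : ℕ) = (∑ x ∈ B.1, (x : ℕ)) + 1 := by
          have := swap_set_sum B ha hb
          have h3 : (a : ℕ) ≤ ∑ x ∈ B.1, (x : ℕ) :=
            Finset.single_le_sum (f := fun x : Fin n => (x : ℕ)) (fun x _ => Nat.zero_le _) ha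
          show ∑ x ∈ insert b (B.1.erase a), (x : ℕ) = _
          omega
        have hlt := sum_val_lt hn B'.1
        have ihres := ih A B' (by omega)
        rw [hγ, Equiv.Perm.sign_trans, Equiv.Perm.sign_permCongr,
          Equiv.Perm.sign_swap hane, hsum] at ihres
        have hexp : (∑ x ∈ A.1, (x : ℕ)) + ((∑ x ∈ B.1, (x : ℕ)) + 1)
            = ((∑ x ∈ A.1, (x : ℕ)) + ∑ x ∈ B.1, (x : ℕ)) + 1 := by omega
        rw [hexp, pow_succ] at ihres
        rw [mul_comm] at ihres
        exact mul_right_cancel ihres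
    · -- swap in A
      have hane : a ≠ b := by intro h; rw [h] at hab; omega
      have hcard' := swap_set_card A ha hb
      set A' : Sub n d := ⟨insert b (A.1.erase a), hcard'⟩ with hA'def
      have hθ := theta_adjacent_swap hd hdn A a b ha hb hab A' rfl
      have hAtrans : theta hd hdn A' = (theta hd hdn A).trans (Equiv.swap a b) :=
        Equiv.ext hθ
      have hγ : (theta hd hdn A').trans (theta hd hdn B).symm
          = ((theta hd hdn A).trans (theta hd hdn B).symm).trans
            (((theta hd hdn B).symm).permCongr (Equiv.swap a b)) := by
        ext x
        simp [hAtrans, Equiv.permCongr_apply]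
      have hsum : ∑ x ∈ A'.1, (x : ℕ) = (∑ x ∈ A.1, (x : ℕ)) + 1 := by
        have := swap_set_sum A ha hb
        have h3 : (a : ℕ) ≤ ∑ x ∈ A.1, (x : ℕ) :=
          Finset.single_le_sum (f := fun x : Fin n => (x : ℕ)) (fun x _ => Nat.zero_le _) ha
        show ∑ x ∈ insert b (A.1.erase a), (x : ℕ) = _
        omega
      have hlt := sum_val_lt hn A'.1
      have ihres := ih A' B (by omega)
      rw [hγ, Equiv.Perm.sign_trans, Equiv.Perm.sign_permCongr,
        Equiv.Perm.sign_swap hane, hsum] at ihres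
      have hexp : ((∑ x ∈ A.1, (x : ℕ)) + 1) + ∑ x ∈ B.1, (x : ℕ)
          = ((∑ x ∈ A.1, (x : ℕ)) + ∑ x ∈ B.1, (x : ℕ)) + 1 := by omega
      rw [hexp, pow_succ] at ihres
      rw [mul_comm] at ihres
      exact mul_right_cancel ihres

lemma eps_ratio (hd : 1 ≤ d) (hdn : d ≤ n) (A B : Sub n d) :
    eps e hd hdn A
      = (-1 : ℂ) ^ ((∑ x ∈ A.1, (x : ℕ)) + ∑ x ∈ B.1, (x : ℕ)) * eps e hd hdn B := by
  have h := sign_theta_ratio hd hdn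
    ((n * n - ∑ x ∈ A.1, (x : ℕ)) + (n * n - ∑ x ∈ B.1, (x : ℕ))) A B le_rfl
  have hγτ : (theta hd hdn A).trans (theta hd hdn B).symm
      = (tau e hd hdn A).trans (tau e hd hdn B).symm := by
    ext x
    simp [tau]
  rw [hγτ, Equiv.Perm.sign_trans, Equiv.Perm.sign_symm] at h
  -- h : sign (tau B) * sign (tau A) = (-1)^s  in ℤˣ
  have hc : eps e hd hdn B * eps e hd hdn A
      = (-1 : ℂ) ^ ((∑ x ∈ A.1, (x : ℕ)) + ∑ x ∈ B.1, (x : ℕ)) := by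
    unfold eps
    have := congrArg (fun u : ℤˣ => ((u : ℤ) : ℂ)) h
    push_cast at this
    convert this using 2 <;> push_cast <;> ring
  calc eps e hd hdn A = (eps e hd hdn B * eps e hd hdn B) * eps e hd hdn A := by
        rw [eps_mul_self, one_mul]
    _ = (-1 : ℂ) ^ ((∑ x ∈ A.1, (x : ℕ)) + ∑ x ∈ B.1, (x : ℕ)) * eps e hd hdn B := by
        rw [mul_assoc, mul_comm (eps e hd hdn B) (eps e hd hdn A), ← hc]
        ring

end Sign


end Stmt13Aux

open Stmt13Aux

/-- The vector `V = (det(u_1, u_{d+1},...,u_n, e_{a_1},...,e_{a_{d-1}}))_a`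
satisfies `(M_{d-1})ᵀ V = β V`, i.e. `β V_A = Σ_B (M_{d-1})_{B,A} V_B`, where `u_1` is an
eigenvector of `M_σ` for `β` and `u_{d+1},...,u_n` are eigenvectors for eigenvalues
`ζ_{d+1},...,ζ_n` with `∏ ζ_i = 1`. -/
theorem stmt13 (n d : ℕ) (hd : 1 ≤ d) (hdn : d ≤ n)
    (M : Matrix (Fin n) (Fin n) ℂ) (β : ℝ)
    (u1 : Fin n → ℂ) (us : Fin (n - d) → Fin n → ℂ) (ζ : Fin (n - d) → ℂ)
    (hu1 : M.mulVec u1 = (β : ℂ) • u1)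
    (hus : ∀ k, M.mulVec (us k) = ζ k • us k)
    (hζ : ∏ k, ζ k = 1)
    (e : (Option (Fin (n - d)) ⊕ Fin (d - 1)) ≃ Fin n) :
    ∀ A : {s : Finset (Fin n) // s.card = d - 1},
      (β : ℂ) * wedgeDet n d u1 us e A
        = ∑ B : {s : Finset (Fin n) // s.card = d - 1},
            dualMatrix n d M B A * wedgeDet n d u1 us e B := by
  classical
  intro A
  set vcol : Option (Fin (n - d)) → Fin n → ℂ :=
    fun o i => Option.elim o (u1 i) (fun k => us k i) with hvcol
  set U : Matrix (Fin n) (Fin (n - d + 1)) ℂ :=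
    Matrix.of (fun k o => vcol ((finSuccEquiv (n - d)) o) k) with hU
  set P : Matrix (Fin (n - d + 1)) (Fin n) ℂ := M.submatrix (csort hd hdn A) id with hP
  set δ : Fin n → ℂ :=
    fun j => Sum.elim (fun o => Option.elim o (β : ℂ) (fun k => ζ k)) (fun _ => (1 : ℂ))
      (e.symm j) with hδ
  -- the wedge matrix of A and its `M`-multiplied version
  set K : Matrix (Fin n) (Fin n) ℂ := Matrix.of fun i j =>
    Sum.elim (fun o => vcol o i)
      (fun jm => if i = (A.1.orderIsoOfFin A.2 jm : Fin n) then (1 : ℂ) else 0)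
      (e.symm j) with hK
  set W : Matrix (Fin n) (Fin n) ℂ := Matrix.of fun i j =>
    Sum.elim (fun o => (M.mulVec (vcol o)) i)
      (fun jm => if i = (A.1.orderIsoOfFin A.2 jm : Fin n) then (1 : ℂ) else 0)
      (e.symm j) with hW
  have hwedgeA : wedgeDet n d u1 us e A = K.det := rfl
  -- Step 1 : det W = β * det K
  have hWK : W = K * Matrix.diagonal δ := by
    ext i j
    rw [Matrix.mul_diagonal]
    show Sum.elim (fun o => (M.mulVec (vcol o)) i) _ (e.symm j)
      = (Sum.elim (fun o => vcol o i) _ (e.symm j))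
          * Sum.elim (fun o => Option.elim o (β : ℂ) (fun k => ζ k)) (fun _ => (1 : ℂ)) (e.symm j)
    rcases hsj : e.symm j with o | jm
    · rcases o with _ | k
      · show M.mulVec u1 i = u1 i * (β : ℂ)
        rw [hu1]
        simp [mul_comm]
      · show M.mulVec (us k) i = us k i * ζ k
        rw [hus k]
        simp [mul_comm]
    · simp
  have hdelta : ∏ j, δ j = (β : ℂ) := by
    calc ∏ j, δ j = ∏ x : Option (Fin (n - d)) ⊕ Fin (d - 1), δ (e x) :=
          (Equiv.prod_comp e δ).symm
      _ = (∏ o : Option (Fin (n - d)), Option.elim o (β : ℂ) (fun k => ζ k))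
            * ∏ _j : Fin (d - 1), (1 : ℂ) := by
          rw [Fintype.prod_sum_type]
          congr 1 <;> exact Finset.prod_congr rfl fun x _ => by simp [hδ]
      _ = (β : ℂ) := by
          rw [Fintype.prod_option]
          simp [hζ]
  have step1 : W.det = (β : ℂ) * K.det := by
    rw [hWK, Matrix.det_mul, Matrix.det_diagonal, hdelta, mul_comm]
  -- Step 2 : Laplace extraction on W
  have step2 : W.det = eps e hd hdn A * (P * U).det := by
    have h2 := det_unit_cols e hd hdn (fun o => M.mulVec (vcol o)) A
    have hPU : (Matrix.of fun (i o : Fin (n - d + 1)) =>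
        M.mulVec (vcol ((finSuccEquiv (n - d)) o)) (csort hd hdn A i)) = P * U := by
      ext i o
      simp [Matrix.mul_apply, Matrix.mulVec, dotProduct, hP, hU,
        Matrix.submatrix_apply]
    calc W.det = eps e hd hdn A * (Matrix.of fun (i o : Fin (n - d + 1)) =>
          M.mulVec (vcol ((finSuccEquiv (n - d)) o)) (csort hd hdn A i)).det := h2
      _ = eps e hd hdn A * (P * U).det := by rw [hPU]
  -- Step 4 : Laplace extraction on each wedge det
  have step4 : ∀ B : Sub n d, wedgeDet n d u1 us e B
      = eps e hd hdn B * (U.submatrix (csort hd hdn B) id).det := by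
    intro B
    have h4 := det_unit_cols e hd hdn vcol B
    have hUB : (Matrix.of fun (i o : Fin (n - d + 1)) =>
        vcol ((finSuccEquiv (n - d)) o) (csort hd hdn B i))
        = U.submatrix (csort hd hdn B) id := by
      ext i o
      simp [hU, Matrix.submatrix_apply]
    calc wedgeDet n d u1 us e B
        = eps e hd hdn B * (Matrix.of fun (i o : Fin (n - d + 1)) =>
            vcol ((finSuccEquiv (n - d)) o) (csort hd hdn B i)).det := h4
      _ = _ := by rw [hUB]
  -- Step 5 : dualMatrix in terms of minors
  have step5 : ∀ B : Sub n d, dualMatrix n d M B A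
      = (-1 : ℂ) ^ (∑ i ∈ A.1, (i : ℕ) + ∑ i ∈ B.1, (i : ℕ))
          * (P.submatrix id (csort hd hdn B)).det := by
    intro B
    unfold dualMatrix
    rw [dif_pos ⟨compl_card hd hdn A, compl_card hd hdn B⟩]
    congr 1
    rw [← Matrix.det_transpose (P.submatrix id (csort hd hdn B))]
    congr 1
  -- assemble
  calc (β : ℂ) * wedgeDet n d u1 us e A = W.det := by rw [hwedgeA, step1]
    _ = eps e hd hdn A * (P * U).det := step2
    _ = eps e hd hdn A * ∑ B : Sub n d,
          (P.submatrix id (csort hd hdn B)).det * (U.submatrix (csort hd hdn B) id).det := by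
        rw [cauchy_binet hd hdn P U]
    _ = ∑ B : Sub n d, eps e hd hdn A *
          ((P.submatrix id (csort hd hdn B)).det * (U.submatrix (csort hd hdn B) id).det) :=
        Finset.mul_sum _ _ _
    _ = ∑ B : {s : Finset (Fin n) // s.card = d - 1},
          dualMatrix n d M B A * wedgeDet n d u1 us e B := by
        refine Finset.sum_congr rfl fun B _ => ?_
        rw [step5 B, step4 B, eps_ratio e hd hdn A B]
        ring
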